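/- Let n > 2 and m ≥ 0. The classical minimally coupled Klein–Gordon field on n-dimensional Minkowski space satisfies the strong energy condition pointwise — i.e. for all field values c ∈ ℝ, all derivative tuples v ∈ ℝⁿ and all timelike t ∈ ℝⁿ one has T(t,t) − (tr T/(n−2)) η(t,t) ≥ 0 — if and only if m = 0. -/

import Mathlib

/-- The Minkowski metric on `ℝⁿ`: `η(x,y) = -x₀y₀ + ∑_{i=1}^{n-1} xᵢyᵢ`. -/
def minkowski {n : ℕ} (x y : Fin n → ℝ) : ℝ :=
  ∑ i : Fin n, (if (i : ℕ) = 0 then (-1 : ℝ) else 1) * x i * y i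

/-- The components of the Minkowski metric `η_{μν} = diag(-1,1,…,1)` on `ℝⁿ`
(equal to its inverse `η^{μν}`). -/
def etaM (n : ℕ) : Matrix (Fin n) (Fin n) ℝ :=
  fun μ ν => if μ = ν then (if (μ : ℕ) = 0 then (-1 : ℝ) else 1) else 0

/-- The minimally coupled Klein–Gordon stress-energy tensor
`T_{μν} = v_μ v_ν - ½ η_{μν}(η*(v,v) + m²c²)`. -/
noncomputable def kgT {n : ℕ} (m c : ℝ) (v : Fin n → ℝ) : Matrix (Fin n) (Fin n) ℝ :=
  fun μ ν => v μ * v ν - (1 / 2) * etaM n μ ν * (minkowski v v + m ^ 2 * c ^ 2)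

/-- The trace `tr T = η^{μν} T_{μν}` with respect to the inverse Minkowski metric. -/
noncomputable def kgTrace {n : ℕ} (m c : ℝ) (v : Fin n → ℝ) : ℝ :=
  ∑ μ : Fin n, ∑ ν : Fin n, etaM n μ ν * kgT m c v μ ν

lemma eta_sum {n : ℕ} (g : Fin n → Fin n → ℝ) :
    ∑ μ : Fin n, ∑ ν : Fin n, etaM n μ ν * g μ ν
      = ∑ μ : Fin n, (if (μ : ℕ) = 0 then (-1 : ℝ) else 1) * g μ μ := by
  refine Finset.sum_congr rfl fun μ _ => ?_
  rw [Finset.sum_eq_single μ]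
  · simp [etaM]
  · intro ν _ hν
    simp [etaM, (Ne.symm hν)]
  · simp

lemma kg_identity (n : ℕ) (hn : 2 < n) (m c : ℝ) (v t : Fin n → ℝ) :
    (∑ μ : Fin n, ∑ ν : Fin n, kgT m c v μ ν * t μ * t ν)
        - (kgTrace m c v / ((n : ℝ) - 2)) * minkowski t t
      = (∑ μ : Fin n, v μ * t μ) ^ 2
        + m ^ 2 * c ^ 2 * minkowski t t / ((n : ℝ) - 2) := by
  have hn2 : ((n : ℝ) - 2) ≠ 0 := by
    have : (2 : ℝ) < n := by exact_mod_cast hn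
    linarith
  set S := minkowski v v with hS
  set K := m ^ 2 * c ^ 2 with hK
  have hE : (∑ μ : Fin n, ∑ ν : Fin n, etaM n μ ν * (t μ * t ν)) = minkowski t t := by
    rw [eta_sum]
    simp only [minkowski]
    exact Finset.sum_congr rfl fun μ _ => by ring
  have h1 : (∑ μ : Fin n, ∑ ν : Fin n, kgT m c v μ ν * t μ * t ν)
      = (∑ μ : Fin n, v μ * t μ) ^ 2 - (1/2) * (S + K) * minkowski t t := by
    have e1 : ∀ μ ν : Fin n, kgT m c v μ ν * t μ * t ν
        = (v μ * t μ) * (v ν * t ν)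
          - (1/2) * (S + K) * (etaM n μ ν * (t μ * t ν)) := by
      intro μ ν; simp only [kgT, ← hS, ← hK]; ring
    calc (∑ μ : Fin n, ∑ ν : Fin n, kgT m c v μ ν * t μ * t ν)
        = (∑ μ : Fin n, ∑ ν : Fin n, ((v μ * t μ) * (v ν * t ν)
            - (1/2) * (S + K) * (etaM n μ ν * (t μ * t ν)))) := by
          refine Finset.sum_congr rfl fun μ _ => Finset.sum_congr rfl fun ν _ => e1 μ ν
      _ = (∑ μ : Fin n, ∑ ν : Fin n, (v μ * t μ) * (v ν * t ν))
            - (1/2) * (S + K) * (∑ μ : Fin n, ∑ ν : Fin n, etaM n μ ν * (t μ * t ν)) := by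
          rw [Finset.mul_sum]
          rw [← Finset.sum_sub_distrib]
          refine Finset.sum_congr rfl fun μ _ => ?_
          rw [Finset.mul_sum, ← Finset.sum_sub_distrib]
      _ = (∑ μ : Fin n, v μ * t μ) ^ 2 - (1/2) * (S + K) * minkowski t t := by
          rw [hE, ← Finset.sum_mul_sum, sq]
  have h2 : kgTrace m c v = S - ((n : ℝ) / 2) * (S + K) := by
    unfold kgTrace
    rw [eta_sum (fun μ ν => kgT m c v μ ν)]
    have e2 : ∀ μ : Fin n, (if (μ : ℕ) = 0 then (-1 : ℝ) else 1) * kgT m c v μ μ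
        = (if (μ : ℕ) = 0 then (-1 : ℝ) else 1) * (v μ * v μ) - (1/2) * (S + K) := by
      intro μ
      rcases eq_or_ne (μ : ℕ) 0 with h0 | h0 <;>
        · simp only [kgT, etaM, if_pos rfl, h0, ← hS, ← hK]
          norm_num
          try ring
    rw [Finset.sum_congr rfl fun μ _ => e2 μ, Finset.sum_sub_distrib]
    have hSsum : (∑ μ : Fin n, (if (μ : ℕ) = 0 then (-1 : ℝ) else 1) * (v μ * v μ)) = S := by
      rw [hS]
      simp only [minkowski]
      exact Finset.sum_congr rfl fun μ _ => by ring
    rw [hSsum, Finset.sum_const, Finset.card_univ, Fintype.card_fin]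
    ring
  rw [h1, h2]
  field_simp
  ring

/-- For `n > 2` and `m ≥ 0`, the classical minimally coupled Klein–Gordon field
satisfies the strong energy condition pointwise — i.e.
`T(t,t) - (tr T/(n-2)) η(t,t) ≥ 0` for all field values `c`, derivative tuples `v`
and timelike `t` — if and only if `m = 0`. -/
theorem kleinGordon_sec_iff_massless (n : ℕ) (hn : 2 < n) (m : ℝ) (hm : 0 ≤ m) :
    (∀ (c : ℝ) (v t : Fin n → ℝ), minkowski t t < 0 →
        0 ≤ (∑ μ : Fin n, ∑ ν : Fin n, kgT m c v μ ν * t μ * t ν)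
            - (kgTrace m c v / ((n : ℝ) - 2)) * minkowski t t) ↔
      m = 0 := by
  have hn2 : (0 : ℝ) < (n : ℝ) - 2 := by
    have : (2 : ℝ) < n := by exact_mod_cast hn
    linarith
  constructor
  · intro h
    set t : Fin n → ℝ := fun i => if (i : ℕ) = 0 then 1 else 0 with ht
    have htt : minkowski t t = -1 := by
      rw [minkowski]
      rw [Finset.sum_eq_single (⟨0, by omega⟩ : Fin n)]
      · simp [ht]
      · intro ν _ hν
        have : (ν : ℕ) ≠ 0 := by
          intro h0
          exact hν (Fin.ext h0)
        simp [ht, this]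
      · simp
    have := h 1 (fun _ => 0) t (by rw [htt]; norm_num)
    rw [kg_identity n hn m 1 (fun _ => 0) t, htt] at this
    simp at this
    have h4 := mul_nonneg this hn2.le
    rw [div_mul_cancel₀ _ (ne_of_gt hn2)] at h4
    nlinarith
  · intro hm0 c v t htt
    rw [kg_identity n hn m c v t, hm0]
    simp
    positivity
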